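/- arXiv:2505.01256 — 6 statements merged into one kernel-verified Lean document; each statement's English description precedes it below -/
import Mathlib

section
/- The function g(x) = (2n/(3x) + 1/2)^(x/2) is strictly monotone increasing on the open interval (0, n/4), for any positive real n. -/
theorem stmt_0 (n : ℝ) (hn : 0 < n) :
    StrictMonoOn (fun x : ℝ => (2 * n / (3 * x) + 1 / 2) ^ (x / 2))
      (Set.Ioo 0 (n / 4)) := by
  set f : ℝ → ℝ := fun x => x / 2 * Real.log (2 * n / (3 * x) + 1 / 2) with hf
  -- basic facts on the interval
  have hbase : ∀ x ∈ Set.Ioo (0:ℝ) (n/4), (19:ℝ)/6 < 2 * n / (3 * x) + 1 / 2 := by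
    intro x hx
    obtain ⟨hx0, hxn⟩ := hx
    have h3x : 0 < 3 * x := by linarith
    have : (8:ℝ)/3 < 2 * n / (3 * x) := by
      rw [lt_div_iff₀ h3x]
      nlinarith
    linarith
  have hpos : ∀ x ∈ Set.Ioo (0:ℝ) (n/4), 0 < 2 * n / (3 * x) + 1 / 2 := by
    intro x hx; linarith [hbase x hx]
  -- derivative of f at each point of the interval
  have hderiv : ∀ x ∈ Set.Ioo (0:ℝ) (n/4),
      HasDerivAt f (1/2 * Real.log (2 * n / (3 * x) + 1 / 2)
        + x / 2 * ((-(2*n/3) * (x^2)⁻¹) / (2 * n / (3 * x) + 1 / 2))) x := by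
    intro x hx
    have hx0 : x ≠ 0 := ne_of_gt hx.1
    have hb := hpos x hx
    have hinner : HasDerivAt (fun y : ℝ => 2 * n / (3 * y) + 1/2)
        (-(2*n/3) * (x^2)⁻¹) x := by
      have h1 : HasDerivAt (fun y : ℝ => (2*n/3) * y⁻¹ + 1/2)
          ((2*n/3) * (-(x^2)⁻¹)) x := ((hasDerivAt_inv hx0).const_mul (2*n/3)).add_const _
      have heq : (fun y : ℝ => 2 * n / (3 * y) + 1/2) = fun y : ℝ => (2*n/3) * y⁻¹ + 1/2 := by
        funext y; ring
      rw [heq]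
      convert h1 using 1; ring
    have hlog : HasDerivAt (fun y : ℝ => Real.log (2 * n / (3 * y) + 1/2))
        ((-(2*n/3) * (x^2)⁻¹) / (2 * n / (3 * x) + 1 / 2)) x := hinner.log (ne_of_gt hb)
    have hid : HasDerivAt (fun y : ℝ => y / 2) (1/2) x := by
      simpa using (hasDerivAt_id x).div_const 2
    have := hid.mul hlog
    exact this
  -- f is strictly monotone
  have hmono : StrictMonoOn f (Set.Ioo 0 (n/4)) := by
    apply strictMonoOn_of_deriv_pos (convex_Ioo _ _)
    · intro x hx
      exact ((hderiv x hx).continuousAt).continuousWithinAt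
    · intro x hx
      rw [interior_Ioo] at hx
      rw [(hderiv x hx).deriv]
      have hx0 := hx.1
      have hb := hpos x hx
      have hb19 := hbase x hx
      -- log part > 1
      have hlog1 : 1 < Real.log (2 * n / (3 * x) + 1 / 2) := by
        rw [Real.lt_log_iff_exp_lt hb]
        have := Real.exp_one_lt_d9
        linarith
      -- second term > -1/2
      have hterm : x / 2 * ((-(2*n/3) * (x^2)⁻¹) / (2 * n / (3 * x) + 1 / 2))
          = -(n/(3*x)) / (2 * n / (3 * x) + 1 / 2) := by
        field_simp
      rw [hterm]
      have ht : 0 < n / (3*x) := by positivity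
      have hlt : n/(3*x) / (2 * n / (3 * x) + 1 / 2) < 1/2 := by
        rw [div_lt_iff₀ hb]
        have : 2 * n / (3 * x) = 2 * (n / (3*x)) := by ring
        rw [this]
        linarith
      have : -(n/(3*x)) / (2 * n / (3 * x) + 1 / 2)
          = -(n/(3*x) / (2 * n / (3 * x) + 1 / 2)) := by ring
      rw [this]
      linarith
  -- transfer to g via exp
  intro a ha b hb hab
  have hga : (2 * n / (3 * a) + 1 / 2) ^ (a / 2) = Real.exp (f a) := by
    rw [Real.rpow_def_of_pos (hpos a ha), hf]; ring_nf
  have hgb : (2 * n / (3 * b) + 1 / 2) ^ (b / 2) = Real.exp (f b) := by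
    rw [Real.rpow_def_of_pos (hpos b hb), hf]; ring_nf
  simp only [hga, hgb]
  exact Real.exp_lt_exp.mpr (hmono ha hb hab)
end

section
/- For every p ∈ [0,1] and every positive integer λ, the quantity 1 - (1-p)^λ lies in the interval [pλ/(1+pλ), 2pλ/(1+pλ)]. -/
theorem stmt_2 (p : ℝ) (hp : p ∈ Set.Icc (0 : ℝ) 1) (l : ℕ) (hl : 1 ≤ l) :
    1 - (1 - p) ^ l ∈ Set.Icc (p * l / (1 + p * l)) (2 * p * l / (1 + p * l)) := by
  obtain ⟨hp0, hp1⟩ := hp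
  have hl0 : (1:ℝ) ≤ l := by exact_mod_cast hl
  have hpl : 0 ≤ p * l := mul_nonneg hp0 (by positivity)
  have hd : (0:ℝ) < 1 + p * l := by linarith
  have hbern1 : 1 + (l:ℝ) * p ≤ (1 + p) ^ l := one_add_mul_le_pow (by linarith) l
  have hbern2 : 1 + (l:ℝ) * (-p) ≤ (1 + (-p)) ^ l := one_add_mul_le_pow (by linarith) l
  have h1p : (0:ℝ) ≤ 1 - p := by linarith
  have hpow : (0:ℝ) ≤ (1 - p) ^ l := pow_nonneg h1p l
  constructor
  · rw [div_le_iff₀ hd]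
    have key : (1 - p)^l * (1 + p * l) ≤ 1 := by
      calc (1-p)^l * (1 + p*l) ≤ (1-p)^l * (1+p)^l := by
              apply mul_le_mul_of_nonneg_left _ hpow
              linarith [hbern1]
        _ = ((1-p)*(1+p))^l := (mul_pow _ _ _).symm
        _ ≤ 1 := pow_le_one₀ (by nlinarith) (by nlinarith)
    nlinarith
  · rw [le_div_iff₀ hd]
    have hb : 1 - p * l ≤ (1-p)^l := by
      have := hbern2
      have h : 1 + (l:ℝ) * (-p) = 1 - p * l := by ring
      rw [h] at this
      have h2 : (1 + (-p)) = 1 - p := by ring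
      rwa [h2] at this
    have key : 1 - p * l ≤ (1 - p)^l * (1 + p * l) := by
      rcases le_or_gt (p * l) 1 with h | h
      · nlinarith
      · nlinarith
    nlinarith
end

section
/- Let v, w ∈ [0,1]^d with d ≥ 2, and suppose there exist indices i ≠ j and reals ℓ₁, ℓ₂ ≥ 1/F (for some F > 0) such that w_i = v_i + ℓ₁ and w_j = v_j - ℓ₂. Let φ be the angle between v and w (i.e., cos φ = (v·w)/(|v||w|)). Then sin(φ) ≥ 1/(√d · F). -/
lemma coord_le_norm {d : ℕ} (x : EuclideanSpace ℝ (Fin d)) (k : Fin d) :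
    |x k| ≤ ‖x‖ := by
  rw [EuclideanSpace.norm_eq]
  rw [← Real.sqrt_sq_eq_abs]
  apply Real.sqrt_le_sqrt
  have : (x k) ^ 2 ≤ ∑ i, ‖x i‖ ^ 2 := by
    have := Finset.single_le_sum (f := fun i => ‖x i‖ ^ 2)
      (fun i _ => by positivity) (Finset.mem_univ k)
    simpa [sq_abs] using this
  simpa using this

theorem stmt_5 (d : ℕ) (hd : 2 ≤ d) (F : ℝ) (hF : 0 < F)
    (v w : EuclideanSpace ℝ (Fin d))
    (hv01 : ∀ i, v i ∈ Set.Icc (0 : ℝ) 1) (hw01 : ∀ i, w i ∈ Set.Icc (0 : ℝ) 1)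
    (hv : v ≠ 0) (hw : w ≠ 0)
    (i j : Fin d) (hij : i ≠ j) (l₁ l₂ : ℝ) (hl₁ : 1 / F ≤ l₁) (hl₂ : 1 / F ≤ l₂)
    (hwi : w i = v i + l₁) (hwj : w j = v j - l₂)
    (φ : ℝ) (hφ : φ ∈ Set.Icc (0 : ℝ) Real.pi)
    (hcos : Real.cos φ = (inner ℝ v w : ℝ) / (‖v‖ * ‖w‖)) :
    1 / (Real.sqrt d * F) ≤ Real.sin φ := by
  have hd0 : (0:ℝ) < d := by
    have : (2:ℝ) ≤ d := by exact_mod_cast hd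
    linarith
  have hF' : 0 < 1/F := by positivity
  have hnv : 0 < ‖v‖ := norm_pos_iff.mpr hv
  have hnw : 0 < ‖w‖ := norm_pos_iff.mpr hw
  set P : ℝ := inner ℝ v w with hP
  have hPnn : 0 ≤ P := by
    rw [hP, PiLp.inner_apply]
    apply Finset.sum_nonneg
    intro k _
    have h1 := (hv01 k).1
    have h2 := (hw01 k).1
    simp only [RCLike.inner_apply, conj_trivial]
    positivity
  set c : ℝ := P / ‖v‖ ^ 2 with hc
  have hcnn : 0 ≤ c := by positivity
  -- coordinate bound on the residual
  have hres : 1/F ≤ ‖w - c • v‖ := by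
    rcases le_or_gt c 1 with hc1 | hc1
    · have hcoord : 1/F ≤ (w - c • v) i := by
        have : (w - c • v) i = w i - c * v i := by
          simp [PiLp.sub_apply, PiLp.smul_apply, smul_eq_mul]
        rw [this, hwi]
        have hvi := (hv01 i).1
        nlinarith
      calc 1/F ≤ (w - c • v) i := hcoord
        _ ≤ |(w - c • v) i| := le_abs_self _
        _ ≤ ‖w - c • v‖ := coord_le_norm _ _
    · have hvj : l₂ ≤ v j := by
        have := (hw01 j).1
        rw [hwj] at this; linarith
      have hcoord : 1/F ≤ -((w - c • v) j) := by
        have : (w - c • v) j = w j - c * v j := by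
          simp [PiLp.sub_apply, PiLp.smul_apply, smul_eq_mul]
        rw [this, hwj]
        nlinarith [hF'.le.trans hl₂]
      calc 1/F ≤ -((w - c • v) j) := hcoord
        _ ≤ |(w - c • v) j| := neg_le_abs _
        _ ≤ ‖w - c • v‖ := coord_le_norm _ _
  -- norm of w at most sqrt d
  have hwd : ‖w‖ ^ 2 ≤ d := by
    rw [EuclideanSpace.norm_eq, Real.sq_sqrt (by positivity)]
    calc (∑ k, ‖w k‖ ^ 2) ≤ ∑ _k : Fin d, (1:ℝ) := by
          apply Finset.sum_le_sum
          intro k _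
          have h1 := (hw01 k).1
          have h2 := (hw01 k).2
          rw [Real.norm_eq_abs, sq_abs]
          nlinarith
      _ = d := by simp
  -- Pythagoras
  have hpyth : ‖w - c • v‖ ^ 2 = ‖w‖ ^ 2 - P ^ 2 / ‖v‖ ^ 2 := by
    have h1 : ‖w - c • v‖ ^ 2 = ‖w‖ ^ 2 - 2 * (inner ℝ w (c • v) : ℝ) + ‖c • v‖ ^ 2 :=
      norm_sub_sq_real w (c • v)
    have h2 : (inner ℝ w (c • v) : ℝ) = c * P := by
      rw [real_inner_smul_right, hP, real_inner_comm]
    have h3 : ‖c • v‖ ^ 2 = c ^ 2 * ‖v‖ ^ 2 := by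
      rw [norm_smul, mul_pow, Real.norm_eq_abs, sq_abs]
    rw [h1, h2, h3, hc]
    field_simp
    ring
  -- reduce to squares
  have hsin0 : 0 ≤ Real.sin φ := Real.sin_nonneg_of_nonneg_of_le_pi hφ.1 hφ.2
  have ha0 : 0 ≤ 1 / (Real.sqrt d * F) := by positivity
  have hsq : (1 / (Real.sqrt d * F)) ^ 2 ≤ Real.sin φ ^ 2 := by
    have hsin2 : Real.sin φ ^ 2 = 1 - Real.cos φ ^ 2 := by
      have := Real.sin_sq_add_cos_sq φ; linarith
    have ha2 : (1 / (Real.sqrt d * F)) ^ 2 = 1 / (d * F ^ 2) := by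
      rw [div_pow, mul_pow, Real.sq_sqrt (by positivity)]
      norm_num
    rw [hsin2, hcos, ha2]
    have hkey : 1 - (P / (‖v‖ * ‖w‖)) ^ 2 = ‖w - c • v‖ ^ 2 / ‖w‖ ^ 2 := by
      rw [hpyth]
      field_simp
    rw [hkey]
    rw [div_le_div_iff₀ (by positivity) (by positivity)]
    have hres2 : (1/F) ^ 2 ≤ ‖w - c • v‖ ^ 2 :=
      pow_le_pow_left₀ hF'.le hres 2
    have h1 : (1/F)^2 * ‖w‖^2 ≤ ‖w - c • v‖^2 * d :=
      mul_le_mul hres2 hwd (sq_nonneg _) (sq_nonneg _)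
    have h2 : ((1/F)^2 * ‖w‖^2) * F^2 ≤ (‖w - c • v‖^2 * d) * F^2 :=
      mul_le_mul_of_nonneg_right h1 (by positivity)
    have h3 : ((1/F)^2 * ‖w‖^2) * F^2 = ‖w‖^2 := by field_simp
    rw [one_mul, ← mul_assoc]
    linarith
  have := Real.sqrt_le_sqrt hsq
  rwa [Real.sqrt_sq ha0, Real.sqrt_sq hsin0] at this
end

section
/- Let b ∈ [0,1]^d with b₁ + ⋯ + b_d = 1 and let p be a positive integer. Then there exists a point r = (a₁/p, …, a_d/p) with a_i ∈ ℕ and a₁ + ⋯ + a_d = p such that |b_i - r_i| ≤ 1/p for every i. -/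
theorem stmt_6 (d : ℕ) (b : Fin d → ℝ) (hb : ∀ i, b i ∈ Set.Icc (0 : ℝ) 1)
    (hsum : ∑ i, b i = 1) (p : ℕ) (hp : 1 ≤ p) :
    ∃ a : Fin d → ℕ, (∑ i, a i = p) ∧ ∀ i, |b i - (a i : ℝ) / p| ≤ 1 / p := by
  classical
  have hp' : (0 : ℝ) < p := by exact_mod_cast hp
  set b' : ℕ → ℝ := fun j => if h : j < d then b ⟨j, h⟩ else 0 with hb'
  have hb'nonneg : ∀ j, 0 ≤ b' j := by
    intro j; simp only [hb']
    split
    · exact (hb _).1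
    · exact le_refl 0
  set S : ℕ → ℝ := fun n => ∑ j ∈ Finset.range n, b' j with hS
  set g : ℕ → ℤ := fun n => ⌊(p : ℝ) * S n⌋ with hg
  have hfrac1 : ∀ n, (g n : ℝ) ≤ (p : ℝ) * S n := fun n => Int.floor_le _
  have hfrac2 : ∀ n, (p : ℝ) * S n < g n + 1 := fun n => Int.lt_floor_add_one _
  have hSsucc : ∀ n, S (n + 1) = S n + b' n := fun n => Finset.sum_range_succ _ n
  have hmono : ∀ n, g n ≤ g (n + 1) := by
    intro n
    apply Int.floor_le_floor
    have := hb'nonneg n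
    have := hSsucc n
    nlinarith
  set a : Fin d → ℕ := fun i => (g (i + 1) - g i).toNat with ha
  have hacast : ∀ i : Fin d, ((a i : ℤ)) = g (i + 1) - g i := by
    intro i
    exact Int.toNat_of_nonneg (by linarith [hmono i.1])
  have hSd : S d = 1 := by
    show ∑ j ∈ Finset.range d, b' j = 1
    rw [← Fin.sum_univ_eq_sum_range (fun j => b' j) d, ← hsum]
    exact Finset.sum_congr rfl fun i _ => by simp [hb', i.2]
  have hg0 : g 0 = 0 := by simp [hg, hS]
  have hgd : g d = p := by simp [hg, hSd]
  have hsuma : ∑ i, a i = p := by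
    have : ((∑ i, a i : ℕ) : ℤ) = (p : ℤ) := by
      push_cast
      rw [Finset.sum_congr rfl (fun i _ => hacast i)]
      rw [Fin.sum_univ_eq_sum_range (fun n => g (n + 1) - g n) d]
      rw [Finset.sum_range_sub g d, hg0, hgd]
      ring
    exact_mod_cast this
  refine ⟨a, hsuma, fun i => ?_⟩
  have hbi : b i = S (i.1 + 1) - S i.1 := by
    rw [hSsucc]
    have : b' i.1 = b i := by simp [hb', i.2]
    rw [this]; ring
  have hai : (a i : ℝ) = (g (i.1 + 1) : ℝ) - (g i.1 : ℝ) := by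
    exact_mod_cast hacast i
  have key : b i - (a i : ℝ) / p =
      (((p : ℝ) * S (i.1 + 1) - (g (i.1 + 1) : ℝ)) - ((p : ℝ) * S i.1 - (g i.1 : ℝ))) / p := by
    rw [hbi, hai]
    field_simp
    ring
  rw [key, abs_div, abs_of_pos hp']
  gcongr
  rw [abs_le]
  constructor
  · linarith [hfrac1 (i.1 + 1), hfrac2 i.1]
  · linarith [hfrac1 i.1, hfrac2 (i.1 + 1)]
end

section
/- A maximum set of mutually incomparable solutions for the d-COCZ function has cardinality exactly (n/d + 1)^{d/2}. In particular, if S is any set of search points in {0,1}^n that are pairwise incomparable under d-COCZ, then |S| ≤ (n/d + 1)^{d/2}, and this bound is attained by any Pareto optimal set with pairwise distinct fitness vectors. -/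
/-- The `j`-th objective (0-indexed) of the d-objective COCZ function on
`{0,1}^n`: the number of ones in the first half plus, for even `j.val`
(1-based odd `j`), the number of ones in the corresponding block of length
`n/d` of the second half, and for odd `j.val` the number of zeros in that
block. -/
def cocz (d n : ℕ) (x : Fin n → Bool) (j : Fin d) : ℕ :=
  (Finset.univ.filter (fun i : Fin n => (i : ℕ) < n / 2 ∧ x i = true)).card +
  if j.val % 2 = 0 then
    (Finset.univ.filter (fun i : Fin n =>
      n / 2 + (j.val / 2) * (n / d) ≤ (i : ℕ) ∧
      (i : ℕ) < n / 2 + (j.val / 2) * (n / d) + n / d ∧ x i = true)).card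
  else
    (Finset.univ.filter (fun i : Fin n =>
      n / 2 + (j.val / 2) * (n / d) ≤ (i : ℕ) ∧
      (i : ℕ) < n / 2 + (j.val / 2) * (n / d) + n / d ∧ x i = false)).card

/-- `x` and `y` are incomparable under d-COCZ. -/
def coczIncomparable (d n : ℕ) (x y : Fin n → Bool) : Prop :=
  ¬ (∀ j : Fin d, cocz d n y j ≤ cocz d n x j) ∧
  ¬ (∀ j : Fin d, cocz d n x j ≤ cocz d n y j)

open Finset

/-- Counting a predicate on `Fin n` via `range n`. -/
lemma finFilterCard (n : ℕ) (P : ℕ → Prop) [DecidablePred P] :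
    (Finset.univ.filter (fun i : Fin n => P (i : ℕ))).card
      = ((Finset.range n).filter P).card := by
  refine Finset.card_bij (fun i _ => (i : ℕ)) ?_ ?_ ?_
  · intro a ha
    simp only [mem_filter, mem_univ, true_and] at ha
    simp [a.isLt, ha]
  · intro a _ b _ h; exact Fin.val_injective h
  · intro b hb
    simp only [mem_filter, mem_range] at hb
    exact ⟨⟨b, hb.1⟩, by simp [hb.2], rfl⟩

/-- Number of ones in the first half. -/
def ones1 (n : ℕ) (x : Fin n → Bool) : ℕ :=
  (Finset.univ.filter (fun i : Fin n => (i : ℕ) < n / 2 ∧ x i = true)).card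

/-- Number of entries equal to `b` in the `k`-th block of length `m` of the
second half. -/
def blk (n m k : ℕ) (x : Fin n → Bool) (b : Bool) : ℕ :=
  (Finset.univ.filter (fun i : Fin n =>
    n / 2 + k * m ≤ (i : ℕ) ∧ (i : ℕ) < n / 2 + k * m + m ∧ x i = b)).card

lemma cocz_eq (d n : ℕ) (x : Fin n → Bool) (j : Fin d) :
    cocz d n x j = ones1 n x +
      if j.val % 2 = 0 then blk n (n / d) (j.val / 2) x true
      else blk n (n / d) (j.val / 2) x false := rfl

lemma blk_sum (n m k : ℕ) (h : n / 2 + k * m + m ≤ n) (x : Fin n → Bool) :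
    blk n m k x true + blk n m k x false = m := by
  unfold blk
  have h1 : ∀ b : Bool, (Finset.univ.filter (fun i : Fin n =>
      n / 2 + k * m ≤ (i : ℕ) ∧ (i : ℕ) < n / 2 + k * m + m ∧ x i = b))
      = (Finset.univ.filter (fun i : Fin n =>
          n / 2 + k * m ≤ (i : ℕ) ∧ (i : ℕ) < n / 2 + k * m + m)).filter
        (fun i => x i = b) := by
    intro b; rw [Finset.filter_filter]
    apply Finset.filter_congr; intro i _; tauto
  rw [h1 true, h1 false]
  have h4 : (Finset.univ.filter (fun i : Fin n =>
      n / 2 + k * m ≤ (i : ℕ) ∧ (i : ℕ) < n / 2 + k * m + m)).card = m := by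
    rw [finFilterCard n (fun i => n / 2 + k * m ≤ i ∧ i < n / 2 + k * m + m)]
    have h5 : (Finset.range n).filter
          (fun i => n / 2 + k * m ≤ i ∧ i < n / 2 + k * m + m)
        = Finset.Ico (n / 2 + k * m) (n / 2 + k * m + m) := by
      ext i; simp only [mem_filter, mem_range, Finset.mem_Ico]; omega
    rw [h5, Nat.card_Ico]; omega
  have h3 := Finset.card_filter_add_card_filter_not
    (s := Finset.univ.filter (fun i : Fin n =>
      n / 2 + k * m ≤ (i : ℕ) ∧ (i : ℕ) < n / 2 + k * m + m))
    (p := fun i => x i = true)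
  rw [h4] at h3
  simpa using h3

/-- The Pareto-optimal search point determined by block values `v`. -/
def pt (n m : ℕ) (v : ℕ → ℕ) : Fin n → Bool := fun i =>
  if (i : ℕ) < n / 2 then true
  else decide (((i : ℕ) - n / 2) % m < v (((i : ℕ) - n / 2) / m))

lemma ones1_pt (n m : ℕ) (v : ℕ → ℕ) : ones1 n (pt n m v) = n / 2 := by
  unfold ones1
  have h1 : (Finset.univ.filter
        (fun i : Fin n => (i : ℕ) < n / 2 ∧ pt n m v i = true))
      = Finset.univ.filter (fun i : Fin n => (i : ℕ) < n / 2) := by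
    apply Finset.filter_congr
    intro i _
    constructor
    · exact fun h => h.1
    · intro h; exact ⟨h, by simp [pt, h]⟩
  rw [h1, finFilterCard n (fun i => i < n / 2)]
  have h2 : (Finset.range n).filter (fun i => i < n / 2)
      = Finset.range (n / 2) := by
    ext i; simp only [mem_filter, mem_range]; omega
  rw [h2, Finset.card_range]

lemma blk_pt (n m k : ℕ) (h : n / 2 + k * m + m ≤ n) (v : ℕ → ℕ) :
    blk n m k (pt n m v) true = min (v k) m := by
  unfold blk
  have key : (Finset.univ.filter (fun i : Fin n =>
        n / 2 + k * m ≤ (i : ℕ) ∧ (i : ℕ) < n / 2 + k * m + m ∧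
          pt n m v i = true)).card
      = ((Finset.range m).filter (fun p => p < v k)).card := by
    refine Finset.card_bij (fun i _ => (i : ℕ) - (n / 2 + k * m)) ?_ ?_ ?_
    · intro i hi
      simp only [mem_filter, mem_univ, true_and] at hi
      obtain ⟨h1, h2, h3⟩ := hi
      simp only [mem_filter, mem_range]
      have hm0 : 0 < m := by omega
      refine ⟨by omega, ?_⟩
      unfold pt at h3
      rw [if_neg (by omega)] at h3
      simp only [decide_eq_true_eq] at h3
      have e1 : (i : ℕ) - n / 2 = ((i : ℕ) - (n / 2 + k * m)) + k * m := by
        omega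
      rw [e1, Nat.add_mul_mod_self_right,
        Nat.add_mul_div_right _ _ hm0] at h3
      have hr : (i : ℕ) - (n / 2 + k * m) < m := by omega
      rw [Nat.mod_eq_of_lt hr, Nat.div_eq_of_lt hr, Nat.zero_add] at h3
      exact h3
    · intro a ha b hb hab
      simp only [mem_filter, mem_univ, true_and] at ha hb
      have hab' : (a : ℕ) - (n / 2 + k * m) = (b : ℕ) - (n / 2 + k * m) := hab
      exact Fin.val_injective (by omega)
    · intro p hp
      simp only [mem_filter, mem_range] at hp
      refine ⟨⟨n / 2 + k * m + p, by omega⟩, ?_, by simp⟩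
      simp only [mem_filter, mem_univ, true_and]
      refine ⟨by simp, by simp; omega, ?_⟩
      have hm0 : 0 < m := by omega
      show pt n m v ⟨n / 2 + k * m + p, by omega⟩ = true
      unfold pt
      rw [if_neg (by simp; omega)]
      simp only [decide_eq_true_eq]
      have e1 : ((⟨n / 2 + k * m + p, by omega⟩ : Fin n) : ℕ) - n / 2
          = p + k * m := by simp; omega
      rw [e1, Nat.add_mul_mod_self_right, Nat.add_mul_div_right _ _ hm0,
        Nat.mod_eq_of_lt hp.1, Nat.div_eq_of_lt hp.1, Nat.zero_add]
      exact hp.2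
  rw [key]
  have h2 : (Finset.range m).filter (fun p => p < v k)
      = Finset.range (min (v k) m) := by
    ext p; simp only [mem_filter, mem_range]; omega
  rw [h2, Finset.card_range]

lemma blk_pt_false (n m k : ℕ) (h : n / 2 + k * m + m ≤ n) (v : ℕ → ℕ) :
    blk n m k (pt n m v) false = m - min (v k) m := by
  have := blk_sum n m k h (pt n m v)
  have := blk_pt n m k h v
  omega

theorem stmt_10 (d n : ℕ) (hd : 0 < d) (hde : 2 ∣ d) (hdn : d ∣ n) :
    (∀ S : Finset (Fin n → Bool),
      (∀ x ∈ S, ∀ y ∈ S, x ≠ y → coczIncomparable d n x y) →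
        S.card ≤ (n / d + 1) ^ (d / 2)) ∧
    (∃ S : Finset (Fin n → Bool),
      (∀ x ∈ S, ∀ y ∈ S, x ≠ y → coczIncomparable d n x y) ∧
        S.card = (n / d + 1) ^ (d / 2)) := by
  obtain ⟨e, rfl⟩ := hde
  obtain ⟨c, rfl⟩ := hdn
  have he : 0 < e := by omega
  set m : ℕ := 2 * e * c / (2 * e) with hm'
  have hm : m = c := Nat.mul_div_cancel_left _ (by omega)
  have hhalf : 2 * e * c / 2 = e * c := by
    rw [mul_assoc]; exact Nat.mul_div_cancel_left _ (by omega)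
  have hd2 : 2 * e / 2 = e := Nat.mul_div_cancel_left _ (by omega)
  -- block bound for k < e
  have hblock : ∀ k, k < e → 2 * e * c / 2 + k * m + m ≤ 2 * e * c := by
    intro k hk
    rw [hhalf, hm]
    have : (k + 1) * c ≤ e * c := Nat.mul_le_mul_right c (by omega)
    nlinarith
  -- blk true is at most m, and determines blk false, for k < e
  have hble : ∀ k, k < e → ∀ x : Fin (2 * e * c) → Bool,
      blk (2 * e * c) m k x true ≤ m := by
    intro k hk x
    have := blk_sum (2 * e * c) m k (hblock k hk) x
    omega
  -- comparability when all block values agree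
  have hcomp : ∀ x y : Fin (2 * e * c) → Bool,
      (∀ k, k < e → blk (2 * e * c) m k x true = blk (2 * e * c) m k y true) →
      ones1 (2 * e * c) x ≤ ones1 (2 * e * c) y →
      ∀ j : Fin (2 * e), cocz (2 * e) (2 * e * c) x j ≤
        cocz (2 * e) (2 * e * c) y j := by
    intro x y hB hA j
    have hj2 : (j : ℕ) / 2 < e := by
      have := j.isLt; omega
    have hBf : blk (2 * e * c) m ((j : ℕ) / 2) x false
        = blk (2 * e * c) m ((j : ℕ) / 2) y false := by
      have h1 := blk_sum (2 * e * c) m ((j : ℕ) / 2) (hblock _ hj2) x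
      have h2 := blk_sum (2 * e * c) m ((j : ℕ) / 2) (hblock _ hj2) y
      have h3 := hB _ hj2
      omega
    rw [cocz_eq, cocz_eq]
    simp only [← hm']
    rcases eq_or_ne ((j : ℕ) % 2) 0 with hpar | hpar
    · rw [if_pos hpar, if_pos hpar, hB _ hj2]; omega
    · rw [if_neg hpar, if_neg hpar, hBf]; omega
  constructor
  · -- upper bound
    intro S hS
    have hinj : Set.InjOn
        (fun x : Fin (2 * e * c) → Bool =>
          (fun k : Fin e => (⟨blk (2 * e * c) m k x true,
            Nat.lt_succ_of_le (hble k k.isLt x)⟩ : Fin (m + 1)))) S := by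
      intro x hx y hy hxy
      by_contra hne
      have hBeq : ∀ k, k < e →
          blk (2 * e * c) m k x true = blk (2 * e * c) m k y true := by
        intro k hk
        have := congrFun hxy ⟨k, hk⟩
        simpa using this
      have hinc := hS x hx y hy hne
      rcases le_total (ones1 (2 * e * c) x) (ones1 (2 * e * c) y) with hA | hA
      · exact hinc.2 (hcomp x y hBeq hA)
      · exact hinc.1 (hcomp y x (fun k hk => (hBeq k hk).symm) hA)
    calc S.card ≤ (Finset.univ : Finset (Fin e → Fin (m + 1))).card :=
          Finset.card_le_card_of_injOn _ (fun _ _ => Finset.mem_univ _) hinj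
      _ = (m + 1) ^ e := by
          simp [Fintype.card_fun]
      _ = (2 * e * c / (2 * e) + 1) ^ (2 * e / 2) := by rw [hd2]
  · -- the construction attaining the bound
    set F : (Fin e → Fin (m + 1)) → (Fin (2 * e * c) → Bool) :=
      fun w => pt (2 * e * c) m
        (fun k => if h : k < e then (w ⟨k, h⟩ : ℕ) else 0) with hF
    have hFblk : ∀ (w : Fin e → Fin (m + 1)) (k : ℕ) (hk : k < e),
        blk (2 * e * c) m k (F w) true = (w ⟨k, hk⟩ : ℕ) := by
      intro w k hk
      rw [hF]
      rw [blk_pt (2 * e * c) m k (hblock k hk)]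
      rw [dif_pos hk]
      have : (w ⟨k, hk⟩ : ℕ) ≤ m := by
        have := (w ⟨k, hk⟩).isLt; omega
      omega
    have hFcocz : ∀ (w : Fin e → Fin (m + 1)) (j : Fin (2 * e)),
        cocz (2 * e) (2 * e * c) (F w) j = e * c +
          (if (j : ℕ) % 2 = 0 then (w ⟨(j : ℕ) / 2, by have := j.isLt; omega⟩ : ℕ)
           else m - (w ⟨(j : ℕ) / 2, by have := j.isLt; omega⟩ : ℕ)) := by
      intro w j
      have hj2 : (j : ℕ) / 2 < e := by have := j.isLt; omega
      have hwle : (w ⟨(j : ℕ) / 2, hj2⟩ : ℕ) ≤ m := by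
        have := (w ⟨(j : ℕ) / 2, hj2⟩).isLt; omega
      rw [cocz_eq]
      simp only [← hm']
      have hones : ones1 (2 * e * c) (F w) = e * c := by
        rw [hF, ones1_pt, hhalf]
      rw [hones]
      rcases eq_or_ne ((j : ℕ) % 2) 0 with hpar | hpar
      · rw [if_pos hpar, if_pos hpar, hFblk w _ hj2]
      · rw [if_neg hpar, if_neg hpar]
        have hfalse : blk (2 * e * c) m ((j : ℕ) / 2) (F w) false
            = m - (w ⟨(j : ℕ) / 2, hj2⟩ : ℕ) := by
          have h1 := blk_sum (2 * e * c) m ((j : ℕ) / 2) (hblock _ hj2) (F w)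
          have h2 := hFblk w _ hj2
          omega
        rw [hfalse]
    -- strict domination failure in both directions when block values differ
    have hkey : ∀ (v w : Fin e → Fin (m + 1)) (k : Fin e), v k < w k →
        coczIncomparable (2 * e) (2 * e * c) (F v) (F w) := by
      intro v w k hk
      have hwle : (w k : ℕ) ≤ m := by have := (w k).isLt; omega
      constructor
      · intro hall
        have hj : (2 * (k : ℕ)) < 2 * e := by have := k.isLt; omega
        have := hall ⟨2 * (k : ℕ), hj⟩
        rw [hFcocz, hFcocz] at this
        simp only [Fin.val_mk] at this
        rw [if_pos (by omega), if_pos (by omega)] at this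
        have hdiv : 2 * (k : ℕ) / 2 = (k : ℕ) := by omega
        simp only [hdiv] at this
        have hvk : (v ⟨(k : ℕ), k.isLt⟩ : ℕ) = (v k : ℕ) := by
          congr
        have hwk : (w ⟨(k : ℕ), k.isLt⟩ : ℕ) = (w k : ℕ) := by
          congr
        rw [hvk, hwk] at this
        omega
      · intro hall
        have hj : (2 * (k : ℕ) + 1) < 2 * e := by have := k.isLt; omega
        have := hall ⟨2 * (k : ℕ) + 1, hj⟩
        rw [hFcocz, hFcocz] at this
        simp only [Fin.val_mk] at this
        rw [if_neg (by omega), if_neg (by omega)] at this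
        have hdiv : (2 * (k : ℕ) + 1) / 2 = (k : ℕ) := by omega
        simp only [hdiv] at this
        have hvk : (v ⟨(k : ℕ), k.isLt⟩ : ℕ) = (v k : ℕ) := by
          congr
        have hwk : (w ⟨(k : ℕ), k.isLt⟩ : ℕ) = (w k : ℕ) := by
          congr
        rw [hvk, hwk] at this
        omega
    have hFinj : Function.Injective F := by
      intro v w hvw
      funext k
      have h1 := hFblk v (k : ℕ) k.isLt
      have h2 := hFblk w (k : ℕ) k.isLt
      rw [hvw] at h1
      have : (v ⟨(k : ℕ), k.isLt⟩ : ℕ) = (w ⟨(k : ℕ), k.isLt⟩ : ℕ) := by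
        omega
      have hk : (⟨(k : ℕ), k.isLt⟩ : Fin e) = k := rfl
      rw [hk] at this
      exact Fin.ext this
    refine ⟨Finset.image F Finset.univ, ?_, ?_⟩
    · intro x hx y hy hxy
      simp only [Finset.mem_image, Finset.mem_univ, true_and] at hx hy
      obtain ⟨v, rfl⟩ := hx
      obtain ⟨w, rfl⟩ := hy
      have hvw : v ≠ w := fun h => hxy (by rw [h])
      obtain ⟨k, hk⟩ := Function.ne_iff.mp hvw
      rcases lt_or_gt_of_ne hk with h | h
      · exact hkey v w k h
      · exact ⟨(hkey w v k h).2, (hkey w v k h).1⟩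
    · rw [Finset.card_image_of_injective _ hFinj, Finset.card_univ]
      rw [hd2]
      simp [Fintype.card_fun]
end

section
/- The number of distinct fitness vectors of the d-COCZ function on {0,1}^n equals (n/2 + 1)·(n/d + 1)^{d/2}. -/
lemma card_val_ico (n s r : ℕ) (hr : r ≤ n) :
    (Finset.univ.filter (fun i : Fin n => s ≤ i.val ∧ i.val < r)).card = r - s := by
  rw [← Nat.card_Ico s r]
  apply Finset.card_nbij (fun i => i.val)
  · intro i hi
    simp only [Finset.coe_filter, Finset.mem_coe, Finset.mem_filter, Finset.mem_univ, true_and, Set.mem_setOf_eq] at hi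
    simp [Finset.mem_Ico, hi.1, hi.2]
  · intro i _ j _ hij
    exact Fin.ext hij
  · intro t ht
    simp only [Finset.coe_Ico, Set.mem_Ico] at ht
    exact ⟨⟨t, lt_of_lt_of_le ht.2 hr⟩, by simp [ht.1, ht.2], rfl⟩

lemma count_split (n s m' : ℕ) (x : Fin n → Bool) (hsm : s + m' ≤ n) :
    (Finset.univ.filter (fun i : Fin n => s ≤ i.val ∧ i.val < s + m' ∧ x i = true)).card +
    (Finset.univ.filter (fun i : Fin n => s ≤ i.val ∧ i.val < s + m' ∧ x i = false)).card = m' := by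
  have hB : (Finset.univ.filter (fun i : Fin n => s ≤ i.val ∧ i.val < s + m')).card = m' := by
    rw [card_val_ico n s (s+m') hsm]; omega
  have e1 : (Finset.univ.filter (fun i : Fin n => s ≤ i.val ∧ i.val < s + m' ∧ x i = true))
      = (Finset.univ.filter (fun i : Fin n => s ≤ i.val ∧ i.val < s + m')).filter
        (fun i => x i = true) := by
    rw [Finset.filter_filter]; apply Finset.filter_congr; intro i _; tauto
  have e2 : (Finset.univ.filter (fun i : Fin n => s ≤ i.val ∧ i.val < s + m' ∧ x i = false))
      = (Finset.univ.filter (fun i : Fin n => s ≤ i.val ∧ i.val < s + m')).filter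
        (fun i => ¬ (x i = true)) := by
    rw [Finset.filter_filter]; apply Finset.filter_congr; intro i _
    simp only [Bool.not_eq_true]; tauto
  rw [e1, e2, Finset.card_filter_add_card_filter_not, hB]

lemma divmod_block (h m k i : ℕ) (hm : 0 < m) (hs : h + k*m ≤ i) (hlt : i < h + k*m + m) :
    (i - h) / m = k ∧ (i - h) % m = i - (h + k*m) := by
  have he : i - h = (i - (h+k*m)) + k * m := by omega
  rw [he]
  constructor
  · rw [Nat.add_mul_div_right _ _ hm, Nat.div_eq_of_lt (by omega)]; omega
  · rw [Nat.add_mul_mod_self_right, Nat.mod_eq_of_lt (by omega)]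

def Xab (n h m a : ℕ) (b : ℕ → ℕ) : Fin n → Bool := fun i =>
  decide (i.val < a ∨ (h ≤ i.val ∧ (i.val - h) % m < b ((i.val - h) / m)))

lemma X_first (n h m a : ℕ) (b : ℕ → ℕ) (ha : a ≤ h) (hh : h ≤ n) :
    (Finset.univ.filter (fun i : Fin n => i.val < h ∧ Xab n h m a b i = true)).card = a := by
  have e : (Finset.univ.filter (fun i : Fin n => i.val < h ∧ Xab n h m a b i = true))
      = (Finset.univ.filter (fun i : Fin n => 0 ≤ i.val ∧ i.val < a)) := by
    ext i
    simp only [Finset.mem_filter, Finset.mem_univ, true_and, Xab, decide_eq_true_eq]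
    constructor
    · rintro ⟨h1, h2 | ⟨h3, _⟩⟩
      · exact ⟨Nat.zero_le _, h2⟩
      · omega
    · rintro ⟨-, h2⟩
      exact ⟨by omega, Or.inl h2⟩
  rw [e, card_val_ico n 0 a (by omega)]; omega

lemma X_block_true (n h m a k : ℕ) (b : ℕ → ℕ) (hm : 0 < m) (ha : a ≤ h) (hbk : b k ≤ m)
    (hn : h + k*m + m ≤ n) :
    (Finset.univ.filter (fun i : Fin n =>
      h + k*m ≤ i.val ∧ i.val < h + k*m + m ∧ Xab n h m a b i = true)).card = b k := by
  have e : (Finset.univ.filter (fun i : Fin n =>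
        h + k*m ≤ i.val ∧ i.val < h + k*m + m ∧ Xab n h m a b i = true))
      = (Finset.univ.filter (fun i : Fin n => h + k*m ≤ i.val ∧ i.val < h + k*m + b k)) := by
    ext i
    simp only [Finset.mem_filter, Finset.mem_univ, true_and, Xab, decide_eq_true_eq]
    constructor
    · rintro ⟨h1, h2, h3⟩
      obtain ⟨hd1, hd2⟩ := divmod_block h m k i.val hm h1 h2
      rcases h3 with h4 | ⟨-, h5⟩
      · omega
      · rw [hd1, hd2] at h5; omega
    · rintro ⟨h1, h2⟩
      have h2' : i.val < h + k*m + m := by omega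
      obtain ⟨hd1, hd2⟩ := divmod_block h m k i.val hm h1 h2'
      exact ⟨h1, h2', Or.inr ⟨by omega, by rw [hd1, hd2]; omega⟩⟩
  rw [e, card_val_ico n _ _ (by omega)]; omega

lemma X_block_false (n h m a k : ℕ) (b : ℕ → ℕ) (hm : 0 < m) (ha : a ≤ h) (hbk : b k ≤ m)
    (hn : h + k*m + m ≤ n) :
    (Finset.univ.filter (fun i : Fin n =>
      h + k*m ≤ i.val ∧ i.val < h + k*m + m ∧ Xab n h m a b i = false)).card = m - b k := by
  have e : (Finset.univ.filter (fun i : Fin n =>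
        h + k*m ≤ i.val ∧ i.val < h + k*m + m ∧ Xab n h m a b i = false))
      = (Finset.univ.filter (fun i : Fin n => h + k*m + b k ≤ i.val ∧ i.val < h + k*m + m)) := by
    ext i
    simp only [Finset.mem_filter, Finset.mem_univ, true_and, Xab, decide_eq_false_iff_not,
      not_or, not_and, not_lt]
    constructor
    · rintro ⟨h1, h2, h3, h4⟩
      obtain ⟨hd1, hd2⟩ := divmod_block h m k i.val hm h1 h2
      have h5 := h4 (by omega)
      rw [hd1, hd2] at h5; omega
    · rintro ⟨h1, h2⟩
      have h1' : h + k*m ≤ i.val := by omega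
      obtain ⟨hd1, hd2⟩ := divmod_block h m k i.val hm h1' h2
      exact ⟨h1', h2, by omega, fun _ => by rw [hd1, hd2]; omega⟩
  rw [e, card_val_ico n _ _ (by omega)]; omega

def gfun (d m : ℕ) (a : ℕ) (b : ℕ → ℕ) : Fin d → ℕ :=
  fun j => a + if j.val % 2 = 0 then b (j.val / 2) else m - b (j.val / 2)

def bf (K M : ℕ) (b : Fin K → Fin (M+1)) : ℕ → ℕ :=
  fun t => if ht : t < K then (b ⟨t, ht⟩).val else 0


theorem stmt_11 (d n : ℕ) (hd : 0 < d) (hde : 2 ∣ d) (hdn : d ∣ n) :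
    (Finset.univ.image (fun x : Fin n → Bool => cocz d n x)).card =
      (n / 2 + 1) * (n / d + 1) ^ (d / 2) := by
  obtain ⟨M, hM⟩ := hdn
  obtain ⟨K, hK⟩ := hde
  have hK0 : 0 < K := by omega
  have hnd : n / d = M := by rw [hM]; exact Nat.mul_div_cancel_left M hd
  have hn2 : n / 2 = K * M := by
    rw [hM, hK, mul_assoc]; exact Nat.mul_div_cancel_left _ (by norm_num)
  have hd2 : d / 2 = K := by rw [hK]; exact Nat.mul_div_cancel_left K (by norm_num)
  have hn : n = 2 * (K * M) := by rw [hM, hK]; ring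
  rcases Nat.eq_zero_or_pos M with hM0 | hM0
  · subst hM0
    have hn0 : n = 0 := by omega
    subst hn0
    simp [Finset.univ_unique]
  -- main case
  set g : Fin (K*M+1) × (Fin K → Fin (M+1)) → (Fin d → ℕ) :=
    fun p => gfun d M p.1.val (bf K M p.2) with hg
  have ginj : Function.Injective g := by
    intro p q hpq
    have hval : ∀ j : Fin d, g p j = g q j := fun j => congrFun hpq j
    have h0 : (0 : ℕ) < d := hd
    have h1 : (1 : ℕ) < d := by omega
    have e0 : p.1.val + (p.2 ⟨0, hK0⟩).val = q.1.val + (q.2 ⟨0, hK0⟩).val := by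
      have h := hval ⟨0, h0⟩
      simpa [hg, gfun, bf, hK0] using h
    have e1 : p.1.val + (M - (p.2 ⟨0, hK0⟩).val) = q.1.val + (M - (q.2 ⟨0, hK0⟩).val) := by
      have h := hval ⟨1, h1⟩
      simpa [hg, gfun, bf, hK0] using h
    have hb1 : (p.2 ⟨0, hK0⟩).val ≤ M := Nat.lt_succ_iff.mp (p.2 ⟨0, hK0⟩).2
    have hb2 : (q.2 ⟨0, hK0⟩).val ≤ M := Nat.lt_succ_iff.mp (q.2 ⟨0, hK0⟩).2
    have ha : p.1.val = q.1.val := by omega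
    have hb : p.2 = q.2 := by
      funext k
      have hk : 2 * k.val < d := by have := k.2; omega
      have hmod : 2 * k.val % 2 = 0 := by omega
      have hdiv : 2 * k.val / 2 = k.val := by omega
      have ek : p.1.val + (p.2 k).val = q.1.val + (q.2 k).val := by
        have h := hval ⟨2 * k.val, hk⟩
        simp only [hg, gfun, bf] at h
        rw [if_pos hmod, if_pos hmod, hdiv] at h
        rw [dif_pos k.2] at h
        simpa using h
      exact Fin.ext (by omega)
    exact Prod.ext (Fin.ext ha) hb
  have himg : (Finset.univ.image (fun x : Fin n → Bool => cocz d n x))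
      = Finset.univ.image g := by
    apply Finset.Subset.antisymm
    · rw [Finset.image_subset_iff]
      intro x _
      set a := (Finset.univ.filter (fun i : Fin n => (i : ℕ) < n / 2 ∧ x i = true)).card with hadef
      have ha : a ≤ K * M := by
        have hs := count_split n 0 (n/2) x (by omega)
        have e : a = (Finset.univ.filter
            (fun i : Fin n => 0 ≤ i.val ∧ i.val < 0 + n / 2 ∧ x i = true)).card := by
          rw [hadef]; congr 1; ext i; simp
        omega
      have hble : ∀ t : ℕ, t < K →
          (Finset.univ.filter (fun i : Fin n =>
            n / 2 + t * (n / d) ≤ (i : ℕ) ∧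
            (i : ℕ) < n / 2 + t * (n / d) + n / d ∧ x i = true)).card ≤ M := by
        intro t ht
        have hmul : t * M + M ≤ K * M := by
          calc t * M + M = (t+1) * M := by ring
          _ ≤ K * M := Nat.mul_le_mul_right M (by omega)
        have hs := count_split n (n/2 + t*(n/d)) (n/d) x (by rw [hnd, hn2]; omega)
        omega
      refine Finset.mem_image.mpr ⟨(⟨a, by omega⟩, fun k =>
        ⟨(Finset.univ.filter (fun i : Fin n =>
            n / 2 + k.val * (n / d) ≤ (i : ℕ) ∧
            (i : ℕ) < n / 2 + k.val * (n / d) + n / d ∧ x i = true)).card,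
          by have := hble k.val k.2; omega⟩), Finset.mem_univ _, ?_⟩
      funext j
      have hjd : j.val / 2 < K := by have := j.2; omega
      by_cases hj : j.val % 2 = 0
      · simp only [hg, gfun, cocz, if_pos hj, bf, dif_pos hjd, hadef]
      · simp only [hg, gfun, cocz, if_neg hj, bf, dif_pos hjd]
        have hs := count_split n (n/2 + (j.val/2)*(n/d)) (n/d) x (by
          have hmul : (j.val/2) * M + M ≤ K * M := by
            calc (j.val/2) * M + M = (j.val/2+1) * M := by ring
            _ ≤ K * M := Nat.mul_le_mul_right M (by omega)
          rw [hnd, hn2]; omega)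
        omega
    · rw [Finset.image_subset_iff]
      intro p _
      refine Finset.mem_image.mpr ⟨Xab n (n/2) (n/d) p.1.val (bf K M p.2), Finset.mem_univ _, ?_⟩
      have ha : p.1.val ≤ n / 2 := by have := p.1.2; omega
      have hm0 : 0 < n / d := by omega
      funext j
      have hjd : j.val / 2 < K := by have := j.2; omega
      have hbk : bf K M p.2 (j.val / 2) ≤ n / d := by
        rw [hnd]; simp only [bf, dif_pos hjd]
        exact Nat.lt_succ_iff.mp (p.2 ⟨j.val/2, hjd⟩).2
      have hblk : n / 2 + (j.val/2) * (n/d) + n/d ≤ n := by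
        have hmul : (j.val/2) * M + M ≤ K * M := by
          calc (j.val/2) * M + M = (j.val/2+1) * M := by ring
          _ ≤ K * M := Nat.mul_le_mul_right M (by omega)
        rw [hnd, hn2]; omega
      have hfirst := X_first n (n/2) (n/d) p.1.val (bf K M p.2) ha (by omega)
      by_cases hj : j.val % 2 = 0
      · have hbt := X_block_true n (n/2) (n/d) p.1.val (j.val/2) (bf K M p.2) hm0 ha hbk hblk
        simp only [hg, gfun, cocz, if_pos hj]
        rw [hfirst, hbt]
      · have hbff := X_block_false n (n/2) (n/d) p.1.val (j.val/2) (bf K M p.2) hm0 ha hbk hblk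
        simp only [hg, gfun, cocz, if_neg hj]
        rw [hfirst, hbff, hnd]
  rw [himg, Finset.card_image_of_injective _ ginj, Finset.card_univ, hn2, hnd, hd2]
  simp [Fintype.card_fun]
end
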